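/- For each δ > 0 there is a constant C such that for all λ ∈ [δ, 1−δ] and all sufficiently large t > 0, one has t·|α_{[tλ]}(t)|² ≤ C, where α_n(t) = 2(-i)^n((n+1)/t)J_{n+1}(t). -/

import Mathlib

open scoped Real

/-- Bessel function of the first kind of integer order `n`. -/
noncomputable def besselJ (n : ℕ) (t : ℝ) : ℝ :=
  (1 / π) * ∫ θ in (0:ℝ)..π, Real.cos (t * Real.sin θ - n * θ)

/-- `α_n(t) = 2 (-i)^n ((n+1)/t) J_{n+1}(t)`. -/
noncomputable def besselAlpha (n : ℕ) (t : ℝ) : ℂ :=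
  2 * (-Complex.I) ^ n * (((n : ℂ) + 1) / (t : ℂ)) * (besselJ (n + 1) t : ℂ)


/-- First-derivative (van der Corput) estimate for the Bessel-type phase. -/
lemma osc_bound (t m lam a b : ℝ) (ht : 0 ≤ t) (hab : a ≤ b) (h0 : 0 ≤ a) (hbπ : b ≤ π)
    (hlam : 0 < lam)
    (hD : ∀ θ ∈ Set.Icc a b, lam ≤ |t * Real.cos θ - m|) :
    |∫ θ in a..b, Real.cos (t * Real.sin θ - m * θ)| ≤ 4 / lam := by
  set F : ℝ → ℝ := fun θ => t * Real.sin θ - m * θ with hF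
  set D : ℝ → ℝ := fun θ => t * Real.cos θ - m with hDdef
  have hDne : ∀ θ ∈ Set.Icc a b, D θ ≠ 0 := by
    intro θ hθ
    have := hD θ hθ
    intro h
    rw [show t * Real.cos θ - m = D θ from rfl, h] at this
    simp at this; linarith
  have hDF : ∀ θ, HasDerivAt F (D θ) θ := by
    intro θ
    have h1 : HasDerivAt (fun θ => t * Real.sin θ) (t * Real.cos θ) θ :=
      (Real.hasDerivAt_sin θ).const_mul t
    have h2 : HasDerivAt (fun θ : ℝ => m * θ) m θ := by
      simpa using (hasDerivAt_id θ).const_mul m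
    exact h1.sub h2
  have hDD : ∀ θ, HasDerivAt D (-(t * Real.sin θ)) θ := by
    intro θ
    have h1 : HasDerivAt (fun θ => t * Real.cos θ) (t * -Real.sin θ) θ :=
      (Real.hasDerivAt_cos θ).const_mul t
    have := h1.sub_const m
    simp only [mul_neg] at this
    exact this
  -- g = sin F / D
  set g : ℝ → ℝ := fun θ => Real.sin (F θ) / D θ with hg
  have hg' : ∀ θ ∈ Set.Icc a b,
      HasDerivAt g (Real.cos (F θ) + t * Real.sin θ * Real.sin (F θ) / (D θ) ^ 2) θ := by
    intro θ hθ
    have hne := hDne θ hθ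
    have h1 : HasDerivAt (fun θ => Real.sin (F θ)) (Real.cos (F θ) * D θ) θ :=
      (Real.hasDerivAt_sin (F θ)).comp θ (hDF θ)
    have := h1.div (hDD θ) hne
    refine this.congr_deriv ?_
    rw [div_eq_iff (pow_ne_zero 2 hne), add_mul, div_mul_cancel₀ _ (pow_ne_zero 2 hne)]
    ring
  -- h = 1 / D
  set h : ℝ → ℝ := fun θ => (D θ)⁻¹ with hh
  have hh' : ∀ θ ∈ Set.Icc a b,
      HasDerivAt h (t * Real.sin θ / (D θ) ^ 2) θ := by
    intro θ hθ
    have hne := hDne θ hθ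
    have := (hDD θ).inv hne
    refine this.congr_deriv ?_
    ring
  -- continuity of pieces on Icc a b
  have hDcont : ContinuousOn D (Set.Icc a b) :=
    (continuous_const.mul Real.continuous_cos).sub continuous_const |>.continuousOn
  have hcont1 : ContinuousOn (fun θ => t * Real.sin θ * Real.sin (F θ) / (D θ) ^ 2)
      (Set.Icc a b) := by
    apply ContinuousOn.div
    · exact ((continuous_const.mul Real.continuous_sin).mul
        (Real.continuous_sin.comp (by continuity))).continuousOn
    · exact hDcont.pow 2
    · intro θ hθ; exact pow_ne_zero 2 (hDne θ hθ)
  have hcont2 : ContinuousOn (fun θ => t * Real.sin θ / (D θ) ^ 2) (Set.Icc a b) := by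
    apply ContinuousOn.div
    · exact (continuous_const.mul Real.continuous_sin).continuousOn
    · exact hDcont.pow 2
    · intro θ hθ; exact pow_ne_zero 2 (hDne θ hθ)
  have hcoscont : ContinuousOn (fun θ => Real.cos (F θ)) (Set.Icc a b) :=
    (Real.continuous_cos.comp (by continuity)).continuousOn
  have huIcc : Set.uIcc a b = Set.Icc a b := Set.uIcc_of_le hab
  have hint1 : IntervalIntegrable (fun θ => t * Real.sin θ * Real.sin (F θ) / (D θ) ^ 2)
      MeasureTheory.volume a b := by
    rw [intervalIntegrable_iff_integrableOn_Icc_of_le hab]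
    exact hcont1.integrableOn_compact isCompact_Icc
  have hint2 : IntervalIntegrable (fun θ => t * Real.sin θ / (D θ) ^ 2)
      MeasureTheory.volume a b := by
    rw [intervalIntegrable_iff_integrableOn_Icc_of_le hab]
    exact hcont2.integrableOn_compact isCompact_Icc
  have hintcos : IntervalIntegrable (fun θ => Real.cos (F θ)) MeasureTheory.volume a b := by
    rw [intervalIntegrable_iff_integrableOn_Icc_of_le hab]
    exact hcoscont.integrableOn_compact isCompact_Icc
  -- FTC for g
  have ftc_g : ∫ θ in a..b, (Real.cos (F θ) + t * Real.sin θ * Real.sin (F θ) / (D θ) ^ 2)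
      = g b - g a := by
    apply intervalIntegral.integral_eq_sub_of_hasDerivAt
    · intro θ hθ; rw [huIcc] at hθ; exact hg' θ hθ
    · rw [huIcc] at *
      exact (hintcos.add hint1)
  -- FTC for h
  have ftc_h : ∫ θ in a..b, t * Real.sin θ / (D θ) ^ 2 = h b - h a := by
    apply intervalIntegral.integral_eq_sub_of_hasDerivAt
    · intro θ hθ; rw [huIcc] at hθ; exact hh' θ hθ
    · exact hint2
  have split : ∫ θ in a..b, Real.cos (F θ)
      = (g b - g a) - ∫ θ in a..b, t * Real.sin θ * Real.sin (F θ) / (D θ) ^ 2 := by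
    rw [← ftc_g, intervalIntegral.integral_add hintcos hint1]
    ring
  -- bounds
  have hgbound : ∀ x ∈ Set.Icc a b, |g x| ≤ 1 / lam := by
    intro x hx
    have hDx := hD x hx
    rw [hg]
    simp only []
    rw [abs_div]
    have h1 : |Real.sin (F x)| ≤ 1 := abs_le.mpr ⟨Real.neg_one_le_sin _, Real.sin_le_one _⟩
    exact div_le_div₀ (by norm_num) h1 hlam hDx
  have hhbound : ∀ x ∈ Set.Icc a b, |h x| ≤ 1 / lam := by
    intro x hx
    have hDx := hD x hx
    rw [hh]
    simp only []
    rw [abs_inv, one_div]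
    exact inv_anti₀ hlam hDx
  have hI2 : |∫ θ in a..b, t * Real.sin θ * Real.sin (F θ) / (D θ) ^ 2| ≤ 2 / lam := by
    have step1 : |∫ θ in a..b, t * Real.sin θ * Real.sin (F θ) / (D θ) ^ 2|
        ≤ ∫ θ in a..b, |t * Real.sin θ * Real.sin (F θ) / (D θ) ^ 2| :=
      intervalIntegral.abs_integral_le_integral_abs hab
    have step2 : ∫ θ in a..b, |t * Real.sin θ * Real.sin (F θ) / (D θ) ^ 2|
        ≤ ∫ θ in a..b, t * Real.sin θ / (D θ) ^ 2 := by
      apply intervalIntegral.integral_mono_on hab hint1.abs hint2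
      intro x hx
      have hs : 0 ≤ Real.sin x :=
        Real.sin_nonneg_of_nonneg_of_le_pi (le_trans h0 hx.1) (le_trans hx.2 hbπ)
      have hsq : (0:ℝ) ≤ (D x) ^ 2 := sq_nonneg _
      rw [abs_div, abs_mul, abs_mul, abs_of_nonneg ht, abs_of_nonneg hs,
        abs_of_nonneg hsq]
      have h1 : |Real.sin (F x)| ≤ 1 := abs_le.mpr ⟨Real.neg_one_le_sin _, Real.sin_le_one _⟩
      have h2 : t * Real.sin x * |Real.sin (F x)| ≤ t * Real.sin x * 1 :=
        mul_le_mul_of_nonneg_left h1 (mul_nonneg ht hs)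
      rcases eq_or_lt_of_le hsq with h|h
      · rw [← h]; simp
      · exact div_le_div_of_nonneg_right (by linarith) h.le
    have step3 : ∫ θ in a..b, t * Real.sin θ / (D θ) ^ 2 ≤ 2 / lam := by
      rw [ftc_h]
      have hb' := hhbound b ⟨hab, le_refl b⟩
      have ha' := hhbound a ⟨le_refl a, hab⟩
      calc h b - h a ≤ |h b - h a| := le_abs_self _
        _ ≤ |h b| + |h a| := abs_sub _ _
        _ ≤ 1/lam + 1/lam := add_le_add hb' ha'
        _ = 2/lam := by ring
    linarith
  have : |∫ θ in a..b, Real.cos (F θ)| ≤ 4 / lam := by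
    rw [split]
    have hgb := hgbound b ⟨hab, le_refl b⟩
    have hga := hgbound a ⟨le_refl a, hab⟩
    calc |g b - g a - ∫ θ in a..b, t * Real.sin θ * Real.sin (F θ) / (D θ) ^ 2|
        ≤ |g b - g a| + |∫ θ in a..b, t * Real.sin θ * Real.sin (F θ) / (D θ) ^ 2| :=
          abs_sub _ _
      _ ≤ (|g b| + |g a|) + 2/lam := add_le_add (abs_sub _ _) hI2
      _ ≤ (1/lam + 1/lam) + 2/lam := by gcongr
      _ = 4/lam := by ring
  exact this

lemma cos_sub_cos_ge (x y s : ℝ) (hxy : x < y)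
    (hs : ∀ ξ ∈ Set.Icc x y, s ≤ Real.sin ξ) :
    (y - x) * s ≤ Real.cos x - Real.cos y := by
  obtain ⟨ξ, hξ, hderiv⟩ := exists_hasDerivAt_eq_slope Real.cos (fun θ => -Real.sin θ) hxy
    Real.continuous_cos.continuousOn (fun θ _ => Real.hasDerivAt_cos θ)
  have hyx : y - x ≠ 0 := by linarith
  have h1 : Real.cos x - Real.cos y = (y - x) * Real.sin ξ := by
    field_simp at hderiv
    linarith
  have h2 := hs ξ ⟨hξ.1.le, hξ.2.le⟩
  rw [h1]
  exact mul_le_mul_of_nonneg_left h2 (by linarith)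

lemma arccos_le_arccos' {x y : ℝ} (hx : -1 ≤ x) (hxy : x ≤ y) (hy : y ≤ 1) :
    Real.arccos y ≤ Real.arccos x := by
  rcases eq_or_lt_of_le hxy with h | h
  · rw [h]
  · exact (Real.strictAntiOn_arccos ⟨hx, hxy.trans hy⟩ ⟨hx.trans hxy, hy⟩ h).le
lemma algebra1 (s p u : ℝ) (hs : s ≠ 0) (hp : p ≠ 0) (hu : u ≠ 0) :
    1/p * (2*u⁻¹ + 8/(u*s)) = (2+8/s)/p/u := by
  field_simp

set_option maxHeartbeats 1000000 in
/-- For each `δ > 0` there is a constant `C` such that `t |α_{[tλ]}(t)|² ≤ C`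
for all `λ ∈ [δ, 1−δ]` and all sufficiently large `t > 0`. -/
theorem besselAlpha_uniform_bound (δ : ℝ) (hδ : 0 < δ) :
    ∃ C t₀ : ℝ, 0 < C ∧ 0 < t₀ ∧ ∀ t : ℝ, t₀ ≤ t →
      ∀ lam : ℝ, δ ≤ lam → lam ≤ 1 - δ →
        t * ‖besselAlpha (⌊t * lam⌋₊) t‖ ^ 2 ≤ C := by
  have hπ := Real.pi_pos
  set δ' := min δ (1/2) with hδ'def
  have hδ'0 : 0 < δ' := lt_min hδ (by norm_num)
  have hδ'half : δ' ≤ 1/2 := min_le_right _ _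
  have hδ'δ : δ' ≤ δ := min_le_left _ _
  set a₀ := Real.arccos (1 - δ'/2) with ha₀def
  set b₀ := Real.arccos δ' with hb₀def
  have ha₀pos : 0 < a₀ := Real.arccos_pos.mpr (by linarith)
  have ha₀pi : a₀ ≤ π := Real.arccos_le_pi _
  have hb₀lt : b₀ < π/2 := Real.arccos_lt_pi_div_two.mpr hδ'0
  have ha₀b₀ : a₀ ≤ b₀ := arccos_le_arccos' (by linarith) (by linarith) (by linarith)
  have hgap : 0 < π/2 - b₀ := by linarith
  set s := Real.sin (a₀/2) with hsdef
  have hs0 : 0 < s := Real.sin_pos_of_pos_of_lt_pi (by linarith) (by linarith)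
  have hsmall : ∀ ξ, a₀/2 ≤ ξ → ξ ≤ π/2 → s ≤ Real.sin ξ := by
    intro ξ h1 h2
    exact Real.sin_le_sin_of_le_of_le_pi_div_two (by linarith) h2 h1
  set K := (2 + 8/s)/π with hKdef
  have hK0 : 0 < K := by positivity
  refine ⟨4*K^2 + 1, 1 + 2/δ' + 4/a₀^2 + 4/(π/2-b₀)^2, by positivity, by positivity, ?_⟩
  intro t ht lam hlam1 hlam2
  have ht1 : (1:ℝ) ≤ t := by
    have : (0:ℝ) ≤ 2/δ' + 4/a₀^2 + 4/(π/2-b₀)^2 := by positivity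
    linarith
  have ht0 : 0 < t := by linarith
  have htδ : 2/δ' ≤ t := by
    have h1 : (0:ℝ) ≤ 4/a₀^2 := by positivity
    have h2 : (0:ℝ) ≤ 4/(π/2-b₀)^2 := by positivity
    linarith
  have hta : 4/a₀^2 ≤ t := by
    have h1 : (0:ℝ) ≤ 2/δ' := by positivity
    have h2 : (0:ℝ) ≤ 4/(π/2-b₀)^2 := by positivity
    linarith
  have htb : 4/(π/2-b₀)^2 ≤ t := by
    have h1 : (0:ℝ) ≤ 2/δ' := by positivity
    have h2 : (0:ℝ) ≤ 4/a₀^2 := by positivity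
    linarith
  have htδ' : 2 ≤ t * δ' := by
    rw [div_le_iff₀ hδ'0] at htδ; linarith
  have hlamδ' : δ' ≤ lam := le_trans hδ'δ hlam1
  have hlamup : lam ≤ 1 - δ' := by linarith
  set n := ⌊t * lam⌋₊ with hndef
  set M : ℝ := (n:ℝ) + 1 with hMdef
  have htlam : 0 < t * lam := mul_pos ht0 (by linarith)
  have hM1 : t * lam < M := by
    rw [hMdef]
    exact_mod_cast Nat.lt_floor_add_one (t * lam)
  have hM2 : (n:ℝ) ≤ t * lam := Nat.floor_le htlam.le
  have hMpos : 0 < M := by positivity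
  set μ := M / t with hμdef
  have hMμ : M = t * μ := by rw [hμdef]; field_simp
  have hμpos : 0 < μ := div_pos hMpos ht0
  have hμlow : δ' ≤ μ := by
    rw [le_div_iff₀ ht0]
    linarith [mul_le_mul_of_nonneg_left hlamδ' ht0.le]
  have hμup : μ ≤ 1 - δ'/2 := by
    rw [div_le_iff₀ ht0]
    linarith [mul_le_mul_of_nonneg_left hlamup ht0.le, htδ']
  have hμ1 : μ ≤ 1 := by linarith
  set θ₀ := Real.arccos μ with hθ₀def
  have hcosθ₀ : Real.cos θ₀ = μ := Real.cos_arccos (by linarith) hμ1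
  have hθ₀a : a₀ ≤ θ₀ := arccos_le_arccos' (by linarith) hμup (by linarith)
  have hθ₀b : θ₀ ≤ b₀ := arccos_le_arccos' (by linarith) hμlow hμ1
  have hst : 0 < Real.sqrt t := Real.sqrt_pos.mpr ht0
  set ρ := (Real.sqrt t)⁻¹ with hρdef
  have hρ0 : 0 < ρ := by positivity
  have hsqle : ∀ u : ℝ, 0 < u → 4/u^2 ≤ t → ρ ≤ u/2 := by
    intro u hu hut
    have h1 : 2/u ≤ Real.sqrt t := by
      rw [show (2:ℝ)/u = Real.sqrt ((2/u)^2) from (Real.sqrt_sq (by positivity)).symm]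
      apply Real.sqrt_le_sqrt
      rw [div_pow]
      norm_num
      linarith
    have h2 : 0 < 2/u := by positivity
    calc ρ ≤ (2/u)⁻¹ := inv_anti₀ h2 h1
      _ = u/2 := by field_simp
  have hρa : ρ ≤ a₀/2 := hsqle a₀ ha₀pos hta
  have hρb : ρ ≤ (π/2 - b₀)/2 := hsqle _ hgap htb
  set c := θ₀ - ρ with hcdef
  set d := θ₀ + ρ with hddef
  have hca : a₀/2 ≤ c := by simp only [hcdef]; linarith
  have hc0 : 0 ≤ c := by linarith
  have hdle : d ≤ π/2 := by simp only [hddef]; linarith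
  have hdπ : d ≤ π := by linarith
  have hcπ : c ≤ π := by linarith
  have hθ₀π2 : θ₀ ≤ π/2 := by linarith
  set lam' := t * (ρ * s) with hlam'def
  have hlam'0 : 0 < lam' := by positivity
  -- left gap estimate
  have hleft : ρ * s ≤ Real.cos c - μ := by
    have := cos_sub_cos_ge c θ₀ s (by simp only [hcdef]; linarith) ?_
    · rw [hcosθ₀] at this
      calc ρ * s = (θ₀ - c) * s := by simp only [hcdef]; ring
        _ ≤ _ := this
    · intro ξ hξ
      exact hsmall ξ (le_trans hca hξ.1) (le_trans hξ.2 hθ₀π2)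
  have hright : ρ * s ≤ μ - Real.cos d := by
    have := cos_sub_cos_ge θ₀ d s (by simp only [hddef]; linarith) ?_
    · rw [hcosθ₀] at this
      calc ρ * s = (d - θ₀) * s := by simp only [hddef]; ring
        _ ≤ _ := this
    · intro ξ hξ
      exact hsmall ξ (by linarith [hξ.1]) (le_trans hξ.2 hdle)
  -- osc bounds
  have hosc1 : |∫ θ in (0:ℝ)..c, Real.cos (t * Real.sin θ - M * θ)| ≤ 4 / lam' := by
    apply osc_bound t M lam' 0 c ht0.le hc0 le_rfl hcπ hlam'0
    intro θ hθ
    have h1 : Real.cos c ≤ Real.cos θ :=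
      Real.cos_le_cos_of_nonneg_of_le_pi hθ.1 hcπ hθ.2
    have h2 : lam' ≤ t * Real.cos θ - M := by
      rw [hMμ, hlam'def]
      have h3 : ρ * s ≤ Real.cos θ - μ := by linarith
      linarith [mul_le_mul_of_nonneg_left h3 ht0.le]
    calc lam' ≤ t * Real.cos θ - M := h2
      _ ≤ |t * Real.cos θ - M| := le_abs_self _
  have hosc2 : |∫ θ in d..π, Real.cos (t * Real.sin θ - M * θ)| ≤ 4 / lam' := by
    apply osc_bound t M lam' d π ht0.le hdπ (by linarith) le_rfl hlam'0
    intro θ hθ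
    have h1 : Real.cos θ ≤ Real.cos d :=
      Real.cos_le_cos_of_nonneg_of_le_pi (by linarith) hθ.2 hθ.1
    have h2 : lam' ≤ -(t * Real.cos θ - M) := by
      rw [hMμ, hlam'def]
      have h3 : ρ * s ≤ μ - Real.cos θ := by linarith
      linarith [mul_le_mul_of_nonneg_left h3 ht0.le]
    calc lam' ≤ -(t * Real.cos θ - M) := h2
      _ ≤ |t * Real.cos θ - M| := neg_le_abs _
  have hoscm : |∫ θ in c..d, Real.cos (t * Real.sin θ - M * θ)| ≤ 2 * ρ := by
    have := intervalIntegral.norm_integral_le_of_norm_le_const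
      (C := 1) (f := fun θ => Real.cos (t * Real.sin θ - M * θ)) (a := c) (b := d) ?_
    · rw [Real.norm_eq_abs] at this
      calc |∫ θ in c..d, Real.cos (t * Real.sin θ - M * θ)| ≤ 1 * |d - c| := this
        _ = 2 * ρ := by rw [abs_of_nonneg (by simp only [hcdef, hddef]; linarith)]
                        simp only [hcdef, hddef]; ring
    · intro θ _
      rw [Real.norm_eq_abs]
      exact abs_le.mpr ⟨Real.neg_one_le_cos _, Real.cos_le_one _⟩
  -- splitting
  have hii : ∀ u v : ℝ, IntervalIntegrable (fun θ => Real.cos (t * Real.sin θ - M * θ))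
      MeasureTheory.volume u v := by
    intro u v
    have hcont : Continuous fun θ : ℝ => Real.cos (t * Real.sin θ - M * θ) :=
      Real.continuous_cos.comp ((continuous_const.mul Real.continuous_sin).sub
        (continuous_const.mul continuous_id))
    exact hcont.intervalIntegrable u v
  have hsplit : ∫ θ in (0:ℝ)..π, Real.cos (t * Real.sin θ - M * θ)
      = (∫ θ in (0:ℝ)..c, Real.cos (t * Real.sin θ - M * θ))
      + (∫ θ in c..d, Real.cos (t * Real.sin θ - M * θ))
      + (∫ θ in d..π, Real.cos (t * Real.sin θ - M * θ)) := by
    rw [intervalIntegral.integral_add_adjacent_intervals (hii 0 c) (hii c d),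
        intervalIntegral.integral_add_adjacent_intervals (hii 0 d) (hii d π)]
  have htotal : |∫ θ in (0:ℝ)..π, Real.cos (t * Real.sin θ - M * θ)|
      ≤ 2 * ρ + 8 / lam' := by
    rw [hsplit]
    set I1 := ∫ θ in (0:ℝ)..c, Real.cos (t * Real.sin θ - M * θ) with hI1
    set I2 := ∫ θ in c..d, Real.cos (t * Real.sin θ - M * θ) with hI2
    set I3 := ∫ θ in d..π, Real.cos (t * Real.sin θ - M * θ) with hI3
    calc |I1 + I2 + I3| ≤ |I1 + I2| + |I3| := abs_add_le _ _
      _ ≤ (|I1| + |I2|) + |I3| := by linarith [abs_add_le I1 I2]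
      _ ≤ (4/lam' + 2*ρ) + 4/lam' := by linarith [hosc1, hosc2, hoscm]
      _ = 2*ρ + 8/lam' := by ring
  -- bound besselJ
  have hJeq : besselJ (n+1) t = (1/π) * ∫ θ in (0:ℝ)..π, Real.cos (t * Real.sin θ - M * θ) := by
    have key : (fun θ : ℝ => Real.cos (t * Real.sin θ - ((n+1:ℕ):ℝ) * θ))
        = (fun θ : ℝ => Real.cos (t * Real.sin θ - M * θ)) := by
      funext θ
      rw [hMdef]
      push_cast
      ring_nf
    unfold besselJ
    rw [key]
  have hρval : ρ * Real.sqrt t = 1 := by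
    rw [hρdef]; field_simp
  have hdivsqrt : t * (Real.sqrt t)⁻¹ = Real.sqrt t := by
    rw [inv_eq_one_div, mul_one_div, Real.div_sqrt]
  have hlam'val : lam' = Real.sqrt t * s := by
    rw [hlam'def, hρdef, ← mul_assoc, hdivsqrt]
  have hJbound : |besselJ (n+1) t| ≤ K / Real.sqrt t := by
    rw [hJeq, abs_mul, abs_of_nonneg (by positivity : (0:ℝ) ≤ 1/π)]
    calc 1/π * |∫ θ in (0:ℝ)..π, Real.cos (t * Real.sin θ - M * θ)|
        ≤ 1/π * (2*ρ + 8/lam') := by gcongr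
      _ = K / Real.sqrt t := by
          rw [hKdef, hlam'val, hρdef]
          exact algebra1 s π (Real.sqrt t) hs0.ne' Real.pi_ne_zero hst.ne' 
  -- norm of besselAlpha
  have hcast : ((n:ℂ) + 1) / (t:ℂ) = ((μ:ℝ):ℂ) := by
    rw [hμdef, hMdef]
    push_cast
    ring
  have hnorm : ‖besselAlpha n t‖ = 2 * μ * |besselJ (n+1) t| := by
    unfold besselAlpha
    rw [hcast]
    rw [norm_mul, norm_mul, norm_mul, norm_pow, norm_neg, Complex.norm_I, one_pow, mul_one,
      Complex.norm_real, Complex.norm_real, Real.norm_eq_abs, Real.norm_eq_abs,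
      abs_of_nonneg hμpos.le]
    norm_num
  -- final arithmetic
  rw [hnorm]
  have hJsq : t * |besselJ (n+1) t|^2 ≤ K^2 := by
    have h1 : |besselJ (n+1) t|^2 ≤ (K / Real.sqrt t)^2 :=
      pow_le_pow_left₀ (abs_nonneg _) hJbound 2
    have h2 : (K / Real.sqrt t)^2 = K^2 / t := by
      rw [div_pow, Real.sq_sqrt ht0.le]
    rw [h2] at h1
    have h3 : t * |besselJ (n+1) t|^2 ≤ t * (K^2/t) :=
      mul_le_mul_of_nonneg_left h1 ht0.le
    have h4 : t * (K^2/t) = K^2 := by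
      rw [mul_comm, div_mul_cancel₀ _ ht0.ne']
    linarith
  have hμsq : μ^2 ≤ 1 := by
    have h5 := mul_le_mul hμ1 hμ1 hμpos.le zero_le_one
    rw [sq]
    simpa using h5
  have hX : 0 ≤ t * |besselJ (n+1) t|^2 := mul_nonneg ht0.le (sq_nonneg _)
  calc t * (2 * μ * |besselJ (n+1) t|)^2 = 4 * μ^2 * (t * |besselJ (n+1) t|^2) := by ring
    _ ≤ 4 * (1 * (t * |besselJ (n+1) t|^2)) := by
        linarith [mul_le_mul_of_nonneg_right hμsq hX]
    _ ≤ 4 * K^2 := by linarith [hJsq]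
    _ ≤ 4*K^2 + 1 := by linarith
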